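/- For any probability measures $\mu,\mu',\nu,\nu'$ on ${\rm Mat}_m(\mathbb{R})$ with finite $p$-th moments ($0<p\leq 1$), the convolutions satisfy $W_p(\mu*\nu,\,\mu'*\nu') \leq \max\{\bar\Theta_p(\nu),\bar\Theta_p(\mu')\}\,(W_p(\mu,\mu')+W_p(\nu,\nu'))$, where $\bar\Theta_p(\nu)=\int\|g\|^p\,d\nu(g)$ and $\mu*\nu$ is the pushforward of $\mu\otimes\nu$ under matrix multiplication $(g,g')\mapsto gg'$. -/

import Mathlib

set_option synthInstance.maxHeartbeats 1000000
set_option maxHeartbeats 2000000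
set_option linter.unusedVariables false


open MeasureTheory ENNReal

noncomputable section

abbrev Mat (m : ℕ) := EuclideanSpace ℝ (Fin m) →L[ℝ] EuclideanSpace ℝ (Fin m)

instance (m : ℕ) : MeasurableSpace (Mat m) := borel _
instance (m : ℕ) : BorelSpace (Mat m) := ⟨rfl⟩

/-- The convolution `μ * ν`: the pushforward of `μ ⊗ ν` under matrix multiplication
`(g, g') ↦ g g'`. -/
def conv {m : ℕ} (μ ν : Measure (Mat m)) : Measure (Mat m) :=
  Measure.map (fun q : Mat m × Mat m => q.1 * q.2) (μ.prod ν)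

/-- The order-`p` Wasserstein distance (`0 < p ≤ 1`), in dual (Kantorovich–Rubinstein) form:
`W_p(μ,ν) = sup { ∫φ d(μ-ν) : φ is p-Hölder with constant ≤ 1 }`. -/
def Wdual {m : ℕ} (p : ℝ) (μ ν : Measure (Mat m)) : ℝ :=
  ⨆ φ : {φ : Mat m → ℝ // ∀ x y, |φ x - φ y| ≤ ‖x - y‖ ^ p},
    ((∫ g, φ.1 g ∂μ) - ∫ g, φ.1 g ∂ν)

section Aux
variable {m : ℕ} {p : ℝ}

lemma holder_continuous (hp0 : 0 < p) {φ : Mat m → ℝ}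
    (H : ∀ x y, |φ x - φ y| ≤ ‖x - y‖ ^ p) : Continuous φ := by
  rw [continuous_iff_continuousAt]
  intro y
  have h1 : Filter.Tendsto (fun x : Mat m => ‖x - y‖ ^ p) (nhds y) (nhds 0) := by
    have h2 : Filter.Tendsto (fun x : Mat m => ‖x - y‖) (nhds y) (nhds 0) := by
      have := ((continuous_id.sub (continuous_const (y := y))).norm).tendsto y
      simpa using this
    have h3 : ContinuousAt (fun t : ℝ => t ^ p) 0 :=
      Real.continuousAt_rpow_const 0 p (Or.inr hp0.le)
    have := h3.tendsto.comp h2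
    simpa [Function.comp_def, Real.zero_rpow hp0.ne'] using this
  have hlow : Filter.Tendsto (fun x : Mat m => φ y - ‖x - y‖ ^ p) (nhds y) (nhds (φ y)) := by
    simpa using (tendsto_const_nhds.sub h1)
  have hhigh : Filter.Tendsto (fun x : Mat m => φ y + ‖x - y‖ ^ p) (nhds y) (nhds (φ y)) := by
    simpa using (tendsto_const_nhds.add h1)
  refine tendsto_of_tendsto_of_tendsto_of_le_of_le hlow hhigh ?_ ?_
  · intro x; have := (abs_le.mp (H x y)).1; simp only; linarith
  · intro x; have := (abs_le.mp (H x y)).2; simp only; linarith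

lemma integrable_of_holder (hp0 : 0 < p) {φ : Mat m → ℝ}
    (H : ∀ x y, |φ x - φ y| ≤ ‖x - y‖ ^ p) (μ : Measure (Mat m)) [IsProbabilityMeasure μ]
    (hμ : Integrable (fun g => ‖g‖ ^ p) μ) : Integrable φ μ := by
  refine (hμ.add (integrable_const |φ 0|)).mono'
    ((holder_continuous hp0 H).aestronglyMeasurable) (ae_of_all _ fun g => ?_)
  have h1 := H g 0
  rw [sub_zero] at h1
  have h2 : |φ g| ≤ |φ g - φ 0| + |φ 0| := by
    calc |φ g| = |(φ g - φ 0) + φ 0| := by ring_nf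
    _ ≤ |φ g - φ 0| + |φ 0| := abs_add_le _ _
  simp only [Real.norm_eq_abs, Pi.add_apply]
  linarith

lemma wdual_bddAbove (hp0 : 0 < p) (μ ν : Measure (Mat m))
    [IsProbabilityMeasure μ] [IsProbabilityMeasure ν]
    (hμ : Integrable (fun g => ‖g‖ ^ p) μ) (hν : Integrable (fun g => ‖g‖ ^ p) ν) :
    BddAbove (Set.range fun φ : {φ : Mat m → ℝ // ∀ x y, |φ x - φ y| ≤ ‖x - y‖ ^ p} =>
      (∫ g, φ.1 g ∂μ) - ∫ g, φ.1 g ∂ν) := by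
  refine ⟨(∫ g, ‖g‖ ^ p ∂μ) + ∫ g, ‖g‖ ^ p ∂ν, ?_⟩
  rintro x ⟨⟨φ, H⟩, rfl⟩
  simp only
  have hiμ : Integrable φ μ := integrable_of_holder hp0 H μ hμ
  have hiν : Integrable φ ν := integrable_of_holder hp0 H ν hν
  set c := φ 0 with hc
  have e1 : ∫ g, (φ g - c) ∂μ = (∫ g, φ g ∂μ) - c := by
    rw [integral_sub hiμ (integrable_const c), integral_const]; simp
  have e2 : ∫ g, (c - φ g) ∂ν = c - ∫ g, φ g ∂ν := by
    rw [integral_sub (integrable_const c) hiν, integral_const]; simp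
  have b1 : ∫ g, (φ g - c) ∂μ ≤ ∫ g, ‖g‖ ^ p ∂μ := by
    refine integral_mono (hiμ.sub (integrable_const c)) hμ fun g => ?_
    have := H g 0; rw [sub_zero] at this
    exact (le_abs_self _).trans this
  have b2 : ∫ g, (c - φ g) ∂ν ≤ ∫ g, ‖g‖ ^ p ∂ν := by
    refine integral_mono ((integrable_const c).sub hiν) hν fun g => ?_
    have := H 0 g; rw [zero_sub, norm_neg] at this
    exact (le_abs_self _).trans this
  linarith

instance : Nonempty {φ : Mat m → ℝ // ∀ x y, |φ x - φ y| ≤ ‖x - y‖ ^ p} :=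
  ⟨⟨fun _ => 0, fun x y => by simpa using Real.rpow_nonneg (norm_nonneg (x - y)) p⟩⟩

lemma wdual_nonneg (hp0 : 0 < p) (μ ν : Measure (Mat m))
    [IsProbabilityMeasure μ] [IsProbabilityMeasure ν]
    (hμ : Integrable (fun g => ‖g‖ ^ p) μ) (hν : Integrable (fun g => ‖g‖ ^ p) ν) :
    0 ≤ Wdual p μ ν := by
  have := le_ciSup (wdual_bddAbove hp0 μ ν hμ hν)
    (⟨fun _ => 0, fun x y => by simpa using Real.rpow_nonneg (norm_nonneg (x - y)) p⟩ :
      {φ : Mat m → ℝ // ∀ x y, |φ x - φ y| ≤ ‖x - y‖ ^ p})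
  simpa [Wdual] using this

lemma diff_le_K_mul_Wdual (hp0 : 0 < p) (α β : Measure (Mat m))
    [IsProbabilityMeasure α] [IsProbabilityMeasure β]
    (hα : Integrable (fun g => ‖g‖ ^ p) α) (hβ : Integrable (fun g => ‖g‖ ^ p) β)
    {ψ : Mat m → ℝ} {K : ℝ} (hK : 0 ≤ K)
    (H : ∀ x y, |ψ x - ψ y| ≤ K * ‖x - y‖ ^ p) :
    (∫ g, ψ g ∂α) - ∫ g, ψ g ∂β ≤ K * Wdual p α β := by
  rcases eq_or_lt_of_le hK with hK0 | hKpos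
  · have hconst : ∀ x, ψ x = ψ 0 := fun x => by
      have h := H x 0; rw [← hK0, zero_mul] at h
      have h2 : ψ x - ψ 0 = 0 := abs_eq_zero.mp (le_antisymm h (abs_nonneg _))
      linarith
    have hfe : ψ = fun _ => ψ 0 := funext hconst
    rw [hfe, integral_const, integral_const, ← hK0]
    simp
  · set φ : Mat m → ℝ := fun x => K⁻¹ * ψ x with hφ
    have hadm : ∀ x y, |φ x - φ y| ≤ ‖x - y‖ ^ p := by
      intro x y
      rw [hφ]; simp only
      rw [← mul_sub, abs_mul, abs_of_pos (inv_pos.mpr hKpos)]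
      calc K⁻¹ * |ψ x - ψ y| ≤ K⁻¹ * (K * ‖x - y‖ ^ p) :=
            mul_le_mul_of_nonneg_left (H x y) (inv_pos.mpr hKpos).le
        _ = ‖x - y‖ ^ p := by field_simp
    have h1 := le_ciSup (wdual_bddAbove hp0 α β hα hβ)
      (⟨φ, hadm⟩ : {φ : Mat m → ℝ // ∀ x y, |φ x - φ y| ≤ ‖x - y‖ ^ p})
    simp only at h1
    have e1 : ∫ g, φ g ∂α = K⁻¹ * ∫ g, ψ g ∂α := by
      simp only [hφ, ← smul_eq_mul]; exact integral_smul _ _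
    have e2 : ∫ g, φ g ∂β = K⁻¹ * ∫ g, ψ g ∂β := by
      simp only [hφ, ← smul_eq_mul]; exact integral_smul _ _
    rw [show (⨆ φ : {φ : Mat m → ℝ // ∀ x y, |φ x - φ y| ≤ ‖x - y‖ ^ p},
      ((∫ g, φ.1 g ∂α) - ∫ g, φ.1 g ∂β)) = Wdual p α β from rfl] at h1
    rw [e1, e2, ← mul_sub] at h1
    exact (inv_mul_le_iff₀ hKpos).mp h1

lemma integrable_prod_holder (hp0 : 0 < p) {φ : Mat m → ℝ}
    (H : ∀ x y, |φ x - φ y| ≤ ‖x - y‖ ^ p) (α β : Measure (Mat m))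
    [IsProbabilityMeasure α] [IsProbabilityMeasure β]
    (hα : Integrable (fun g => ‖g‖ ^ p) α) (hβ : Integrable (fun g => ‖g‖ ^ p) β) :
    Integrable (fun q : Mat m × Mat m => φ (q.1 * q.2)) (α.prod β) := by
  refine ((hα.mul_prod hβ).add (integrable_const |φ 0|)).mono'
    (((holder_continuous hp0 H).comp continuous_mul).aestronglyMeasurable)
    (ae_of_all _ fun q => ?_)
  simp only [Real.norm_eq_abs, Pi.add_apply]
  have h1 := H (q.1 * q.2) 0
  rw [sub_zero] at h1
  have h2 : ‖q.1 * q.2‖ ^ p ≤ ‖q.1‖ ^ p * ‖q.2‖ ^ p := by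
    rw [← Real.mul_rpow (norm_nonneg _) (norm_nonneg _)]
    exact Real.rpow_le_rpow (norm_nonneg _) (norm_mul_le _ _) hp0.le
  have h3 : |φ (q.1 * q.2)| ≤ |φ (q.1 * q.2) - φ 0| + |φ 0| := by
    calc |φ (q.1 * q.2)| = |(φ (q.1 * q.2) - φ 0) + φ 0| := by ring_nf
      _ ≤ _ := abs_add_le _ _
  linarith

lemma integral_conv_eq (hp0 : 0 < p) {φ : Mat m → ℝ}
    (H : ∀ x y, |φ x - φ y| ≤ ‖x - y‖ ^ p) (α β : Measure (Mat m))
    [IsProbabilityMeasure α] [IsProbabilityMeasure β]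
    (hα : Integrable (fun g => ‖g‖ ^ p) α) (hβ : Integrable (fun g => ‖g‖ ^ p) β) :
    ∫ g, φ g ∂(conv α β) = ∫ g, ∫ g', φ (g * g') ∂β ∂α := by
  rw [conv, integral_map (continuous_mul.measurable.aemeasurable)
    ((holder_continuous hp0 H).aestronglyMeasurable)]
  exact integral_prod _ (integrable_prod_holder hp0 H α β hα hβ)

lemma integral_conv_eq' (hp0 : 0 < p) {φ : Mat m → ℝ}
    (H : ∀ x y, |φ x - φ y| ≤ ‖x - y‖ ^ p) (α β : Measure (Mat m))
    [IsProbabilityMeasure α] [IsProbabilityMeasure β]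
    (hα : Integrable (fun g => ‖g‖ ^ p) α) (hβ : Integrable (fun g => ‖g‖ ^ p) β) :
    ∫ g, φ g ∂(conv α β) = ∫ g', ∫ g, φ (g * g') ∂α ∂β := by
  rw [integral_conv_eq hp0 H α β hα hβ]
  exact integral_integral_swap (integrable_prod_holder hp0 H α β hα hβ)

lemma integrable_slice_left (hp0 : 0 < p) {φ : Mat m → ℝ}
    (H : ∀ x y, |φ x - φ y| ≤ ‖x - y‖ ^ p) (β : Measure (Mat m))
    [IsProbabilityMeasure β] (hβ : Integrable (fun g => ‖g‖ ^ p) β) (g : Mat m) :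
    Integrable (fun g' => φ (g * g')) β := by
  refine ((hβ.const_mul (‖g‖ ^ p)).add (integrable_const |φ 0|)).mono'
    (((holder_continuous hp0 H).comp (continuous_mul_left g)).aestronglyMeasurable)
    (ae_of_all _ fun g' => ?_)
  simp only [Real.norm_eq_abs, Pi.add_apply]
  have h1 := H (g * g') 0
  rw [sub_zero] at h1
  have h2 : ‖g * g'‖ ^ p ≤ ‖g‖ ^ p * ‖g'‖ ^ p := by
    rw [← Real.mul_rpow (norm_nonneg _) (norm_nonneg _)]
    exact Real.rpow_le_rpow (norm_nonneg _) (norm_mul_le _ _) hp0.le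
  have h3 : |φ (g * g')| ≤ |φ (g * g') - φ 0| + |φ 0| := by
    calc |φ (g * g')| = |(φ (g * g') - φ 0) + φ 0| := by ring_nf
      _ ≤ _ := abs_add_le _ _
  linarith

lemma integrable_slice_right (hp0 : 0 < p) {φ : Mat m → ℝ}
    (H : ∀ x y, |φ x - φ y| ≤ ‖x - y‖ ^ p) (α : Measure (Mat m))
    [IsProbabilityMeasure α] (hα : Integrable (fun g => ‖g‖ ^ p) α) (g' : Mat m) :
    Integrable (fun g => φ (g * g')) α := by
  refine ((hα.mul_const (‖g'‖ ^ p)).add (integrable_const |φ 0|)).mono'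
    (((holder_continuous hp0 H).comp (continuous_mul_right g')).aestronglyMeasurable)
    (ae_of_all _ fun g => ?_)
  simp only [Real.norm_eq_abs, Pi.add_apply]
  have h1 := H (g * g') 0
  rw [sub_zero] at h1
  have h2 : ‖g * g'‖ ^ p ≤ ‖g‖ ^ p * ‖g'‖ ^ p := by
    rw [← Real.mul_rpow (norm_nonneg _) (norm_nonneg _)]
    exact Real.rpow_le_rpow (norm_nonneg _) (norm_mul_le _ _) hp0.le
  have h3 : |φ (g * g')| ≤ |φ (g * g') - φ 0| + |φ 0| := by
    calc |φ (g * g')| = |(φ (g * g') - φ 0) + φ 0| := by ring_nf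
      _ ≤ _ := abs_add_le _ _
  linarith

lemma holder_left (hp0 : 0 < p) {φ : Mat m → ℝ}
    (H : ∀ x y, |φ x - φ y| ≤ ‖x - y‖ ^ p) (β : Measure (Mat m))
    [IsProbabilityMeasure β] (hβ : Integrable (fun g => ‖g‖ ^ p) β) :
    ∀ x y, |(∫ g', φ (x * g') ∂β) - ∫ g', φ (y * g') ∂β|
      ≤ (∫ g, ‖g‖ ^ p ∂β) * ‖x - y‖ ^ p := by
  intro x y
  rw [← integral_sub (integrable_slice_left hp0 H β hβ x) (integrable_slice_left hp0 H β hβ y)]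
  calc |∫ g', (φ (x * g') - φ (y * g')) ∂β|
      ≤ ∫ g', |φ (x * g') - φ (y * g')| ∂β := by
        simpa [Real.norm_eq_abs] using
          norm_integral_le_integral_norm (fun g' => φ (x * g') - φ (y * g'))
    _ ≤ ∫ g', ‖x - y‖ ^ p * ‖g'‖ ^ p ∂β := by
        refine integral_mono
          (((integrable_slice_left hp0 H β hβ x).sub (integrable_slice_left hp0 H β hβ y)).abs)
          (hβ.const_mul _) fun g' => ?_
        have h1 := H (x * g') (y * g')
        have h2 : ‖x * g' - y * g'‖ ^ p ≤ ‖x - y‖ ^ p * ‖g'‖ ^ p := by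
          rw [← sub_mul, ← Real.mul_rpow (norm_nonneg _) (norm_nonneg _)]
          exact Real.rpow_le_rpow (norm_nonneg _) (norm_mul_le _ _) hp0.le
        exact h1.trans h2
    _ = (∫ g, ‖g‖ ^ p ∂β) * ‖x - y‖ ^ p := by
        rw [show (fun g' : Mat m => ‖x - y‖ ^ p * ‖g'‖ ^ p)
          = fun g' => ‖x - y‖ ^ p • ‖g'‖ ^ p from rfl, integral_smul]
        simp [smul_eq_mul, mul_comm]

lemma holder_right (hp0 : 0 < p) {φ : Mat m → ℝ}
    (H : ∀ x y, |φ x - φ y| ≤ ‖x - y‖ ^ p) (α : Measure (Mat m))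
    [IsProbabilityMeasure α] (hα : Integrable (fun g => ‖g‖ ^ p) α) :
    ∀ x y, |(∫ g, φ (g * x) ∂α) - ∫ g, φ (g * y) ∂α|
      ≤ (∫ g, ‖g‖ ^ p ∂α) * ‖x - y‖ ^ p := by
  intro x y
  rw [← integral_sub (integrable_slice_right hp0 H α hα x) (integrable_slice_right hp0 H α hα y)]
  calc |∫ g, (φ (g * x) - φ (g * y)) ∂α|
      ≤ ∫ g, |φ (g * x) - φ (g * y)| ∂α := by
        simpa [Real.norm_eq_abs] using
          norm_integral_le_integral_norm (fun g => φ (g * x) - φ (g * y))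
    _ ≤ ∫ g, ‖g‖ ^ p * ‖x - y‖ ^ p ∂α := by
        refine integral_mono
          (((integrable_slice_right hp0 H α hα x).sub (integrable_slice_right hp0 H α hα y)).abs)
          (hα.mul_const _) fun g => ?_
        have h1 := H (g * x) (g * y)
        have h2 : ‖g * x - g * y‖ ^ p ≤ ‖g‖ ^ p * ‖x - y‖ ^ p := by
          rw [← mul_sub, ← Real.mul_rpow (norm_nonneg _) (norm_nonneg _)]
          exact Real.rpow_le_rpow (norm_nonneg _) (norm_mul_le _ _) hp0.le
        exact h1.trans h2
    _ = (∫ g, ‖g‖ ^ p ∂α) * ‖x - y‖ ^ p := by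
        simp only [← smul_eq_mul]
        rw [integral_smul_const]

end Aux

/-- the convolution is locally Lipschitz for `W_p`:
`W_p(μ*ν, μ'*ν') ≤ max{Θ̄_p(ν), Θ̄_p(μ')} (W_p(μ,μ') + W_p(ν,ν'))`,
where `Θ̄_p(ν) = ∫ ‖g‖^p dν(g)`. -/
theorem Wp_conv_le {m : ℕ} {p : ℝ} (hp0 : 0 < p) (hp1 : p ≤ 1)
    (μ μ' ν ν' : Measure (Mat m))
    [IsProbabilityMeasure μ] [IsProbabilityMeasure μ']
    [IsProbabilityMeasure ν] [IsProbabilityMeasure ν']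
    (hμ : Integrable (fun g => ‖g‖ ^ p) μ) (hμ' : Integrable (fun g => ‖g‖ ^ p) μ')
    (hν : Integrable (fun g => ‖g‖ ^ p) ν) (hν' : Integrable (fun g => ‖g‖ ^ p) ν') :
    Wdual p (conv μ ν) (conv μ' ν')
      ≤ max (∫ g, ‖g‖ ^ p ∂ν) (∫ g, ‖g‖ ^ p ∂μ')
        * (Wdual p μ μ' + Wdual p ν ν') := by
  rw [Wdual]
  refine ciSup_le fun Φ => ?_
  obtain ⟨φ, H⟩ := Φ
  simp only
  set Θν := ∫ g, ‖g‖ ^ p ∂ν with hΘν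
  set Θμ' := ∫ g, ‖g‖ ^ p ∂μ' with hΘμ'
  have hΘνnn : 0 ≤ Θν := integral_nonneg fun g => Real.rpow_nonneg (norm_nonneg _) _
  have hΘμ'nn : 0 ≤ Θμ' := integral_nonneg fun g => Real.rpow_nonneg (norm_nonneg _) _
  have e1 : ∫ g, φ g ∂(conv μ ν) = ∫ g, ∫ g', φ (g * g') ∂ν ∂μ :=
    integral_conv_eq hp0 H μ ν hμ hν
  have e2 : ∫ g, φ g ∂(conv μ' ν) = ∫ g, ∫ g', φ (g * g') ∂ν ∂μ' :=
    integral_conv_eq hp0 H μ' ν hμ' hν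
  have e3 : ∫ g, φ g ∂(conv μ' ν) = ∫ g', ∫ g, φ (g * g') ∂μ' ∂ν :=
    integral_conv_eq' hp0 H μ' ν hμ' hν
  have e4 : ∫ g, φ g ∂(conv μ' ν') = ∫ g', ∫ g, φ (g * g') ∂μ' ∂ν' :=
    integral_conv_eq' hp0 H μ' ν' hμ' hν'
  have d1 : (∫ g, (∫ g', φ (g * g') ∂ν) ∂μ) - ∫ g, (∫ g', φ (g * g') ∂ν) ∂μ'
      ≤ Θν * Wdual p μ μ' :=
    diff_le_K_mul_Wdual hp0 μ μ' hμ hμ' hΘνnn (holder_left hp0 H ν hν)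
  have d2 : (∫ g', (∫ g, φ (g * g') ∂μ') ∂ν) - ∫ g', (∫ g, φ (g * g') ∂μ') ∂ν'
      ≤ Θμ' * Wdual p ν ν' :=
    diff_le_K_mul_Wdual hp0 ν ν' hν hν' hΘμ'nn (holder_right hp0 H μ' hμ')
  have hW1 : 0 ≤ Wdual p μ μ' := wdual_nonneg hp0 μ μ' hμ hμ'
  have hW2 : 0 ≤ Wdual p ν ν' := wdual_nonneg hp0 ν ν' hν hν'
  have key : (∫ g, φ g ∂(conv μ ν)) - ∫ g, φ g ∂(conv μ' ν')
      ≤ Θν * Wdual p μ μ' + Θμ' * Wdual p ν ν' := by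
    rw [e1, e4]
    have := e2.symm.trans e3
    linarith
  refine key.trans ?_
  have m1 : Θν * Wdual p μ μ' ≤ max Θν Θμ' * Wdual p μ μ' :=
    mul_le_mul_of_nonneg_right (le_max_left _ _) hW1
  have m2 : Θμ' * Wdual p ν ν' ≤ max Θν Θμ' * Wdual p ν ν' :=
    mul_le_mul_of_nonneg_right (le_max_right _ _) hW2
  rw [mul_add]
  linarith
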